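/- For every integer N ≥ 1 and every convex w : {0,…,N} → ℝ, the fundamental gap of the hypercube Jacobi matrix satisfies Γ(J_w) = λ_2 − λ_1 ≥ 2. -/

import Mathlib

/-- The hypercube Jacobi matrix `J_w`: the `(N+1) × (N+1)` real symmetric matrix with
diagonal entries `N + w m` and off-diagonal entries `-h(m)` with `h(m) = √((m+1)(N-m))`. -/
noncomputable def hypJ (N : ℕ) (w : ℕ → ℝ) : Matrix (Fin (N + 1)) (Fin (N + 1)) ℝ :=
  Matrix.of fun i j =>
    if i = j then (N : ℝ) + w (i : ℕ)
    else if (i : ℕ) + 1 = (j : ℕ) then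
      -Real.sqrt (((i : ℕ) + 1) * ((N : ℝ) - (i : ℕ)))
    else if (j : ℕ) + 1 = (i : ℕ) then
      -Real.sqrt (((j : ℕ) + 1) * ((N : ℝ) - (j : ℕ)))
    else 0

/-- `μ` is an eigenvalue of the real matrix `A`. -/
def IsEigen {n : ℕ} (A : Matrix (Fin n) (Fin n) ℝ) (μ : ℝ) : Prop :=
  ∃ v : Fin n → ℝ, v ≠ 0 ∧ A.mulVec v = μ • v

/-- `l1 < l2` are the two smallest eigenvalues of `A`. -/
def TwoSmallest {n : ℕ} (A : Matrix (Fin n) (Fin n) ℝ) (l1 l2 : ℝ) : Prop :=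
  IsEigen A l1 ∧ IsEigen A l2 ∧ l1 < l2 ∧
    ∀ μ, IsEigen A μ → l1 ≤ μ ∧ (μ ≠ l1 → l2 ≤ μ)

section HypGapAux
open Matrix

noncomputable def hh (N m : ℕ) : ℝ := Real.sqrt ((m+1) * ((N:ℝ) - m))

lemma hh_nonneg (N m : ℕ) : 0 ≤ hh N m := Real.sqrt_nonneg _

lemma hh_pos (N m : ℕ) (h : m < N) : 0 < hh N m := by
  apply Real.sqrt_pos.2
  have h1 : (m:ℝ) < N := by exact_mod_cast h
  have h2 : (0:ℝ) < (m:ℝ)+1 := by positivity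
  nlinarith

lemma hh_sq (N m : ℕ) (h : m ≤ N) : hh N m ^ 2 = (m+1) * ((N:ℝ) - m) := by
  rw [hh, Real.sq_sqrt]
  have h1 : (m:ℝ) ≤ N := by exact_mod_cast h
  have h2 : (0:ℝ) ≤ (m:ℝ)+1 := by positivity
  nlinarith

lemma hh_last (N : ℕ) : hh N N = 0 := by
  simp [hh]

/-- extension of a `Fin (N+1)` vector to `ℕ` by zero -/
noncomputable def vext (N : ℕ) (y : Fin (N+1) → ℝ) (m : ℕ) : ℝ :=
  if h : m < N + 1 then y ⟨m, h⟩ else 0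

lemma ext_of_lt (N : ℕ) (y : Fin (N+1) → ℝ) (m : ℕ) (h : m < N + 1) :
    vext N y m = y ⟨m, h⟩ := dif_pos h

lemma ext_top (N : ℕ) (y : Fin (N+1) → ℝ) : vext N y (N+1) = 0 := dif_neg (by omega)


lemma hypJ_row (N : ℕ) (w : ℕ → ℝ) (y : Fin (N+1) → ℝ) (m : ℕ) (hm : m ≤ N) :
    (hypJ N w).mulVec y ⟨m, by omega⟩ =
      ((N:ℝ) + w m) * vext N y m
        - (if m = 0 then 0 else hh N (m-1) * vext N y (m-1))
        - hh N m * vext N y (m+1) := by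
  have hmlt : m < N + 1 := by omega
  rcases Nat.eq_zero_or_pos m with rfl | hm0
  · -- m = 0
    have key : ∀ j : Fin (N+1), hypJ N w ⟨0, hmlt⟩ j * y j =
        (if (j:ℕ) = 0 then ((N:ℝ) + w 0) * vext N y (j:ℕ) else 0)
        + (if (j:ℕ) = 1 then -(hh N 0) * vext N y (j:ℕ) else 0) := by
      rintro ⟨jv, hj⟩
      rw [ext_of_lt N y jv hj]
      simp only [hypJ, Matrix.of_apply, Fin.mk.injEq, Fin.val_mk, hh]
      split_ifs <;> first
        | (exfalso; omega)
        | (exfalso; assumption)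
        | (subst_vars; push_cast; ring_nf)
    have : (hypJ N w).mulVec y ⟨0, hmlt⟩ = ∑ i ∈ Finset.range (N+1),
        ((if i = 0 then ((N:ℝ) + w 0) * vext N y i else 0)
        + (if i = 1 then -(hh N 0) * vext N y i else 0)) := by
      rw [← Fin.sum_univ_eq_sum_range]
      simp only [Matrix.mulVec, dotProduct]
      exact Finset.sum_congr rfl fun j _ => key j
    rw [this, Finset.sum_add_distrib, Finset.sum_ite_eq' (Finset.range (N+1)) 0,
      Finset.sum_ite_eq' (Finset.range (N+1)) 1]
    rcases Nat.eq_zero_or_pos N with rfl | hN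
    · simp [ext_top, hh_last]
    · rw [if_pos (show (0:ℕ) ∈ Finset.range (N+1) by simp only [Finset.mem_range]; omega),
        if_pos (show (1:ℕ) ∈ Finset.range (N+1) by simp only [Finset.mem_range]; omega),
        if_pos (show (0:ℕ) = 0 from rfl)]
      ring
  · -- 1 ≤ m
    have key : ∀ j : Fin (N+1), hypJ N w ⟨m, hmlt⟩ j * y j =
        (if (j:ℕ) = m-1 then -(hh N (m-1)) * vext N y (j:ℕ) else 0)
        + (if (j:ℕ) = m then ((N:ℝ) + w m) * vext N y (j:ℕ) else 0)
        + (if (j:ℕ) = m+1 then -(hh N m) * vext N y (j:ℕ) else 0) := by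
      rintro ⟨jv, hj⟩
      rw [ext_of_lt N y jv hj]
      simp only [hypJ, Matrix.of_apply, Fin.mk.injEq, Fin.val_mk, hh]
      split_ifs <;> first
        | (exfalso; omega)
        | (exfalso; assumption)
        | (subst_vars; push_cast; ring_nf)
    have hstep : (hypJ N w).mulVec y ⟨m, hmlt⟩ = ∑ i ∈ Finset.range (N+1),
        ((if i = m-1 then -(hh N (m-1)) * vext N y i else 0)
        + (if i = m then ((N:ℝ) + w m) * vext N y i else 0)
        + (if i = m+1 then -(hh N m) * vext N y i else 0)) := by
      rw [← Fin.sum_univ_eq_sum_range]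
      simp only [Matrix.mulVec, dotProduct]
      exact Finset.sum_congr rfl fun j _ => key j
    rw [hstep, Finset.sum_add_distrib, Finset.sum_add_distrib,
      Finset.sum_ite_eq' (Finset.range (N+1)) (m-1),
      Finset.sum_ite_eq' (Finset.range (N+1)) m,
      Finset.sum_ite_eq' (Finset.range (N+1)) (m+1)]
    rw [if_pos (show m - 1 ∈ Finset.range (N+1) by simp only [Finset.mem_range]; omega),
      if_pos (show m ∈ Finset.range (N+1) by simp only [Finset.mem_range]; omega),
      if_neg (show ¬ m = 0 by omega)]
    by_cases hmN : m = N
    · subst hmN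
      rw [if_neg (show ¬ (m + 1 ∈ Finset.range (m+1)) by simp only [Finset.mem_range]; omega),
        ext_top, hh_last]
      ring
    · rw [if_pos (show m + 1 ∈ Finset.range (N+1) by simp only [Finset.mem_range]; omega)]
      ring

lemma hypJ_herm (N : ℕ) (w : ℕ → ℝ) : (hypJ N w).IsHermitian := by
  unfold Matrix.IsHermitian
  ext i j
  rcases i with ⟨iv, hi⟩
  rcases j with ⟨jv, hj⟩
  simp only [Matrix.conjTranspose_apply, hypJ, Matrix.of_apply, Fin.mk.injEq, star_trivial]
  split_ifs <;> first
    | rfl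
    | (exfalso; omega)
    | (subst_vars; rfl)

def IsEigen' {n : ℕ} (A : Matrix (Fin n) (Fin n) ℝ) (μ : ℝ) : Prop :=
  ∃ v : Fin n → ℝ, v ≠ 0 ∧ A.mulVec v = μ • v

lemma eig_row (N : ℕ) (w : ℕ → ℝ) (y : Fin (N+1) → ℝ) (lam : ℝ)
    (hy : (hypJ N w).mulVec y = lam • y) (m : ℕ) (hm : m ≤ N) :
    ((N:ℝ) + w m - lam) * vext N y m =
      (if m = 0 then 0 else hh N (m-1) * vext N y (m-1)) + hh N m * vext N y (m+1) := by
  have h1 := hypJ_row N w y m hm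
  rw [hy] at h1
  have h2 : (lam • y) ⟨m, by omega⟩ = lam * vext N y m := by
    rw [ext_of_lt N y m (by omega)]; rfl
  rw [h2] at h1
  linarith [h1]

lemma hypJ_offdiag_nonpos (N : ℕ) (w : ℕ → ℝ) (i j : Fin (N+1)) (hij : i ≠ j) :
    hypJ N w i j ≤ 0 := by
  simp only [hypJ, Matrix.of_apply]
  rw [if_neg hij]
  split_ifs <;> first
    | exact neg_nonpos_of_nonneg (Real.sqrt_nonneg _)
    | exact le_refl 0

lemma exists_pos_ground (N : ℕ) (w : ℕ → ℝ) (l1 : ℝ)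
    (hex : IsEigen' (hypJ N w) l1)
    (hmin : ∀ μ, IsEigen' (hypJ N w) μ → l1 ≤ μ) :
    ∃ x : Fin (N+1) → ℝ, (∀ i, 0 < x i) ∧ (hypJ N w).mulVec x = l1 • x := by
  set B : Matrix (Fin (N+1)) (Fin (N+1)) ℝ := hypJ N w - l1 • 1 with hBdef
  have hB : B.IsHermitian := by
    apply Matrix.IsHermitian.sub (hypJ_herm N w)
    unfold Matrix.IsHermitian
    rw [Matrix.conjTranspose_smul, Matrix.conjTranspose_one]
    simp
  have hBmul : ∀ z : Fin (N+1) → ℝ, B.mulVec z = (hypJ N w).mulVec z - l1 • z := by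
    intro z
    rw [hBdef, Matrix.sub_mulVec, Matrix.smul_mulVec, Matrix.one_mulVec]
  have hPSD : B.PosSemidef := by
    apply hB.posSemidef_iff_eigenvalues_nonneg.mpr
    intro i
    have hmu := hB.mulVec_eigenvectorBasis i
    set uf : Fin (N+1) → ℝ := ⇑(hB.eigenvectorBasis i) with hufdef
    have hune : uf ≠ 0 := by
      intro hc
      exact hB.eigenvectorBasis.orthonormal.ne_zero i (by ext k; exact congrFun hc k)
    have hJu : (hypJ N w).mulVec uf = (hB.eigenvalues i + l1) • uf := by
      have h1 := hBmul uf
      rw [hmu] at h1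
      have h2 : (hypJ N w).mulVec uf = hB.eigenvalues i • uf + l1 • uf := by
        rw [h1]; abel
      rw [h2, ← add_smul]
    have hle := hmin _ ⟨uf, hune, hJu⟩
    rw [Pi.zero_apply]; linarith
  obtain ⟨v, hvne, hv⟩ := hex
  have hBv : B.mulVec v = 0 := by
    rw [hBmul, hv]; abel
  obtain ⟨x, hxdef⟩ : ∃ x : Fin (N+1) → ℝ, x = fun i => |v i| := ⟨_, rfl⟩
  have hxBx_le : x ⬝ᵥ B.mulVec x ≤ 0 := by
    have hexp : ∀ z : Fin (N+1) → ℝ, z ⬝ᵥ B.mulVec z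
        = ∑ i : Fin (N+1), ∑ j : Fin (N+1), z i * (B i j * z j) := by
      intro z
      simp only [dotProduct, Matrix.mulVec, Finset.mul_sum]
    have h0 : v ⬝ᵥ B.mulVec v = 0 := by rw [hBv, dotProduct_zero]
    rw [hexp]
    have hle : ∑ i : Fin (N+1), ∑ j : Fin (N+1), x i * (B i j * x j)
        ≤ ∑ i : Fin (N+1), ∑ j : Fin (N+1), v i * (B i j * v j) := by
      apply Finset.sum_le_sum
      intro i _
      apply Finset.sum_le_sum
      intro j _
      by_cases hij : i = j
      · subst hij
        have hsq : x i * x i = v i * v i := by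
          rw [hxdef]; exact abs_mul_abs_self _
        refine le_of_eq ?_
        calc x i * (B i i * x i) = B i i * (x i * x i) := by ring
          _ = B i i * (v i * v i) := by rw [hsq]
          _ = v i * (B i i * v i) := by ring
      · have hBij : B i j ≤ 0 := by
          have h1 : (1 : Matrix (Fin (N+1)) (Fin (N+1)) ℝ) i j = 0 := Matrix.one_apply_ne hij
          have : B i j = hypJ N w i j := by
            rw [hBdef]; simp [Matrix.sub_apply, h1]
          rw [this]
          exact hypJ_offdiag_nonpos N w i j hij
        have habs : v i * v j ≤ x i * x j := by
          rw [hxdef]; simp only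
          calc v i * v j ≤ |v i * v j| := le_abs_self _
            _ = |v i| * |v j| := abs_mul _ _
        calc x i * (B i j * x j) = B i j * (x i * x j) := by ring
          _ ≤ B i j * (v i * v j) := by
              exact mul_le_mul_of_nonpos_left habs hBij
          _ = v i * (B i j * v j) := by ring
    rw [hexp] at h0
    linarith
  have hxBx_ge : 0 ≤ x ⬝ᵥ B.mulVec x := by
    have := hPSD.dotProduct_mulVec_nonneg x
    simpa using this
  have hBx : B.mulVec x = 0 := by
    have := (hPSD.dotProduct_mulVec_zero_iff x).1 (by
      have : star x = x := by simp
      rw [this]; linarith)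
    exact this
  have hx : (hypJ N w).mulVec x = l1 • x := by
    have := hBmul x
    rw [hBx] at this
    exact sub_eq_zero.mp this.symm
  have hxnn : ∀ i, 0 ≤ x i := by
    intro i; rw [hxdef]; exact abs_nonneg _
  refine ⟨x, ?_, hx⟩
  intro i0
  rcases lt_or_eq_of_le (hxnn i0) with h | h
  · exact h
  -- x i0 = 0 : derive contradiction
  exfalso
  have hXnn : ∀ m, 0 ≤ vext N x m := by
    intro m
    unfold vext
    split
    · exact hxnn _
    · exact le_refl 0
  have hrow := eig_row N w x l1 hx
  have prop : ∀ m, m ≤ N → vext N x m = 0 →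
      vext N x (m+1) = 0 ∧ (1 ≤ m → vext N x (m-1) = 0) := by
    intro m hm hm0
    have h1 := hrow m hm
    rw [hm0, mul_zero] at h1
    have hg : (0:ℝ) ≤ (if m = 0 then 0 else hh N (m-1) * vext N x (m-1)) := by
      split
      · exact le_refl 0
      · exact mul_nonneg (hh_nonneg N _) (hXnn _)
    have hup : (0:ℝ) ≤ hh N m * vext N x (m+1) := mul_nonneg (hh_nonneg N _) (hXnn _)
    have hg0 : (if m = 0 then (0:ℝ) else hh N (m-1) * vext N x (m-1)) = 0 := by linarith
    have hup0 : hh N m * vext N x (m+1) = 0 := by linarith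
    constructor
    · rcases Nat.lt_or_ge m N with hmN | hmN
      · have := hh_pos N m hmN
        rcases mul_eq_zero.mp hup0 with hc | hc
        · exact absurd hc (ne_of_gt this)
        · exact hc
      · have : m = N := le_antisymm hm hmN
        subst this
        exact ext_top _ x
    · intro hm1
      rw [if_neg (by omega)] at hg0
      have := hh_pos N (m-1) (by omega)
      rcases mul_eq_zero.mp hg0 with hc | hc
      · exact absurd hc (ne_of_gt this)
      · exact hc
  have hXi0 : vext N x (i0 : ℕ) = 0 := by
    rw [ext_of_lt N x (i0:ℕ) i0.isLt]
    exact h.symm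
  have down : ∀ d, d ≤ (i0:ℕ) → vext N x ((i0:ℕ) - d) = 0 := by
    intro d
    induction d with
    | zero => intro _; simpa using hXi0
    | succ k ih =>
      intro hk
      have h1 := ih (by omega)
      have h2 := (prop ((i0:ℕ) - k) (by omega) h1).2 (by omega)
      have : (i0:ℕ) - k - 1 = (i0:ℕ) - (k+1) := by omega
      rwa [this] at h2
  have hX0 : vext N x 0 = 0 := by
    have := down (i0:ℕ) (le_refl _)
    simpa using this
  have up : ∀ m, m ≤ N → vext N x m = 0 := by
    intro m
    induction m with
    | zero => intro _; exact hX0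
    | succ k ih =>
      intro hk
      exact (prop k (by omega) (ih (by omega))).1
  have hveq : v = 0 := by
    funext j
    have hxj : x j = 0 := by
      have := up (j:ℕ) (by omega)
      rwa [ext_of_lt N x (j:ℕ) j.isLt] at this
    have : |v j| = 0 := by rw [hxdef] at hxj; exact hxj
    simpa using this
  exact hvne hveq

lemma u_mono (N : ℕ) (u : ℕ → ℝ)
    (hupos : ∀ m, m + 1 ≤ N → 0 < u m)
    (hstar : ∀ j, j + 2 ≤ N →
      ((N:ℝ) - j) * (u (j+1) - u j) + (j:ℝ) * ((u j)⁻¹ - (u (j-1))⁻¹)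
      ≤ ((N:ℝ) - j - 2) * (u (j+2) - u (j+1)) + ((j:ℝ)+2) * ((u (j+1))⁻¹ - (u j)⁻¹)) :
    ∀ m, m + 2 ≤ N → u (m+1) ≤ u m := by
  intro m0 hm0
  by_contra hv
  push_neg at hv
  have hex : ∃ k, k + 2 ≤ N ∧ u k < u (k+1) := ⟨m0, hm0, hv⟩
  obtain ⟨k, hk, hkmin⟩ : ∃ k, (k + 2 ≤ N ∧ u k < u (k+1)) ∧
      ∀ j, j < k → ¬(j + 2 ≤ N ∧ u j < u (j+1)) :=
    ⟨Nat.find hex, Nat.find_spec hex, fun j hj => Nat.find_min hex hj⟩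
  have hN2 : 2 ≤ N := by omega
  -- the invariant propagates
  have key : ∀ j, k ≤ j → j + 2 ≤ N →
      u j < u (j+1) ∧
      0 ≤ ((N:ℝ) - j) * (u (j+1) - u j) + (j:ℝ) * ((u j)⁻¹ - (u (j-1))⁻¹) := by
    intro j hj
    induction j, hj using Nat.le_induction with
    | base =>
      intro _
      refine ⟨hk.2, ?_⟩
      have h1 : (0:ℝ) ≤ ((N:ℝ) - k) * (u (k+1) - u k) := by
        apply mul_nonneg
        · have : (k:ℝ) + 2 ≤ N := by exact_mod_cast hk.1
          linarith
        · linarith [hk.2]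
      have h2 : (0:ℝ) ≤ (k:ℝ) * ((u k)⁻¹ - (u (k-1))⁻¹) := by
        rcases Nat.eq_zero_or_pos k with rfl | hkpos
        · norm_num
        · obtain ⟨kk, rfl⟩ : ∃ kk, k = kk + 1 := ⟨k - 1, by omega⟩
          simp only [Nat.add_sub_cancel]
          have hmon : u (kk+1) ≤ u kk := by
            by_contra hcc
            push_neg at hcc
            exact hkmin kk (by omega) ⟨by omega, hcc⟩
          have hp1 : 0 < u (kk+1) := hupos _ (by omega)
          have hinv : (u kk)⁻¹ ≤ (u (kk+1))⁻¹ :=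
            inv_anti₀ hp1 hmon
          apply mul_nonneg (by positivity)
          linarith
      linarith
    | succ j hkj IH =>
      intro hj2
      obtain ⟨hε, hH⟩ := IH (by omega)
      have hs := hstar j (by omega)
      have hRHS : (0:ℝ) ≤ ((N:ℝ) - j - 2) * (u (j+2) - u (j+1))
          + ((j:ℝ)+2) * ((u (j+1))⁻¹ - (u j)⁻¹) := le_trans hH hs
      have hpj : 0 < u j := hupos _ (by omega)
      have hpj1 : 0 < u (j+1) := hupos _ (by omega)
      have hη : (u (j+1))⁻¹ - (u j)⁻¹ < 0 := by
        have : (u (j+1))⁻¹ < (u j)⁻¹ := inv_strictAnti₀ hpj hε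
        linarith
      have hcoef : (0:ℝ) < (N:ℝ) - j - 2 := by
        have : (j:ℝ) + 3 ≤ N := by exact_mod_cast hj2
        linarith
      have hε1 : 0 < u (j+2) - u (j+1) := by
        nlinarith [hRHS, hη, hcoef]
      constructor
      · linarith
      · have hid : ((N:ℝ) - (j+1:ℕ)) * (u (j+1+1) - u (j+1))
            + ((j+1:ℕ):ℝ) * ((u (j+1))⁻¹ - (u (j+1-1))⁻¹)
            = (((N:ℝ) - j - 2) * (u (j+2) - u (j+1))
              + ((j:ℝ)+2) * ((u (j+1))⁻¹ - (u j)⁻¹))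
              + (u (j+2) - u (j+1)) - ((u (j+1))⁻¹ - (u j)⁻¹) := by
          simp only [Nat.add_sub_cancel]
          push_cast
          ring
        rw [hid]
        linarith
  -- final contradiction at j = N-2
  obtain ⟨hεf, hHf⟩ := key (N-2) (by omega) (by omega)
  have hs := hstar (N-2) (by omega)
  have hzero : (N:ℝ) - ((N-2:ℕ):ℝ) - 2 = 0 := by
    rw [Nat.cast_sub (by omega : 2 ≤ N)]
    push_cast
    ring
  have hp1 : 0 < u (N-2) := hupos _ (by omega)
  have hp2 : 0 < u (N-2+1) := hupos _ (by omega)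
  have hη : (u (N-2+1))⁻¹ - (u (N-2))⁻¹ < 0 := by
    have : (u (N-2+1))⁻¹ < (u (N-2))⁻¹ := inv_strictAnti₀ hp1 hεf
    linarith
  have hcpos : (0:ℝ) < ((N-2:ℕ):ℝ) + 2 := by positivity
  have h1 : ((N:ℝ) - ((N-2:ℕ):ℝ) - 2) * (u (N-2+2) - u (N-2+1)) = 0 := by
    rw [hzero]; ring
  have h2 : (((N-2:ℕ):ℝ) + 2) * ((u (N-2+1))⁻¹ - (u (N-2))⁻¹) < 0 :=
    mul_neg_of_pos_of_neg hcpos hη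
  linarith

lemma gap_core (N : ℕ) (u : ℕ → ℝ) (γ : ℝ) (U : ℕ → ℝ)
    (hupos : ∀ m, m + 1 ≤ N → 0 < u m)
    (hmono : ∀ m, m + 2 ≤ N → u (m+1) ≤ u m)
    (hrel : ∀ m, m + 1 ≤ N → γ * U m
      = (((N:ℝ) - m) * u m + ((m:ℝ)+1) * (u m)⁻¹) * U m
        - ((N:ℝ) - (m+1:ℕ)) * u (m+1) * U (m+1)
        - (if m = 0 then 0 else (m:ℝ) * (u (m-1))⁻¹ * U (m-1)))
    (m0 : ℕ) (hm0 : m0 + 1 ≤ N) (hU0 : 0 < U m0)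
    (hmax : ∀ j, j + 1 ≤ N → |U j| ≤ U m0) : 2 ≤ γ := by
  have hpos0 : 0 < u m0 := hupos _ hm0
  -- term (a) : the upper neighbour
  have ha : ((N:ℝ) - (m0+1:ℕ)) * u (m0+1) * U (m0+1)
      ≤ ((N:ℝ) - (m0+1:ℕ)) * u (m0+1) * U m0 := by
    rcases Nat.lt_or_ge (m0+1) N with hlt | hge
    · have hc : 0 ≤ ((N:ℝ) - (m0+1:ℕ)) * u (m0+1) := by
        apply mul_nonneg
        · have : ((m0+1:ℕ):ℝ) ≤ N := by exact_mod_cast le_of_lt hlt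
          linarith
        · exact le_of_lt (hupos _ (by omega))
      apply mul_le_mul_of_nonneg_left _ hc
      have := hmax (m0+1) (by omega)
      calc U (m0+1) ≤ |U (m0+1)| := le_abs_self _
        _ ≤ U m0 := this
    · have hNeq : m0 + 1 = N := by omega
      have : ((N:ℝ) - (m0+1:ℕ)) = 0 := by rw [hNeq]; ring
      rw [this]; ring_nf; exact le_refl _
  -- term (b) : the lower neighbour (guard)
  have hb : (if m0 = 0 then (0:ℝ) else (m0:ℝ) * (u (m0-1))⁻¹ * U (m0-1))
      ≤ (if m0 = 0 then (0:ℝ) else (m0:ℝ) * (u (m0-1))⁻¹ * U m0) := by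
    split
    · exact le_refl _
    · rename_i hm0ne
      have hc : 0 ≤ (m0:ℝ) * (u (m0-1))⁻¹ := by
        apply mul_nonneg (by positivity)
        have := hupos (m0-1) (by omega)
        positivity
      apply mul_le_mul_of_nonneg_left _ hc
      have := hmax (m0-1) (by omega)
      calc U (m0-1) ≤ |U (m0-1)| := le_abs_self _
        _ ≤ U m0 := this
  -- term (c) : the diagonal bound
  have hc1 : u m0 ≤ ((N:ℝ) - m0) * u m0 - ((N:ℝ) - (m0+1:ℕ)) * u (m0+1) := by
    rcases Nat.lt_or_ge (m0+1) N with hlt | hge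
    · have hm : u (m0+1) ≤ u m0 := hmono m0 (by omega)
      have hcn : (0:ℝ) ≤ (N:ℝ) - (m0+1:ℕ) := by
        have : ((m0+1:ℕ):ℝ) ≤ N := by exact_mod_cast le_of_lt hlt
        linarith
      have h2 : ((N:ℝ) - (m0+1:ℕ)) * u (m0+1) ≤ ((N:ℝ) - (m0+1:ℕ)) * u m0 :=
        mul_le_mul_of_nonneg_left hm hcn
      have hcast : ((m0+1:ℕ):ℝ) = (m0:ℝ) + 1 := by push_cast; ring
      nlinarith [h2]
    · have hNeq : m0 + 1 = N := by omega
      have h0 : ((N:ℝ) - (m0+1:ℕ)) = 0 := by rw [hNeq]; ring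
      have h1 : ((N:ℝ) - m0) = 1 := by
        have : ((m0+1:ℕ):ℝ) = N := by rw [hNeq]
        push_cast at this
        linarith
      rw [h0, h1]; ring_nf; exact le_refl _
  have hc2 : (u m0)⁻¹ ≤ ((m0:ℝ)+1) * (u m0)⁻¹
      - (if m0 = 0 then (0:ℝ) else (m0:ℝ) * (u (m0-1))⁻¹) := by
    split
    · rename_i h0
      subst h0
      norm_num
    · rename_i hm0ne
      have hprev : 0 < u (m0-1) := hupos _ (by omega)
      have hmm : u m0 ≤ u (m0-1) := by
        have := hmono (m0-1) (by omega)
        have he : m0 - 1 + 1 = m0 := by omega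
        rwa [he] at this
      have hinv : (u (m0-1))⁻¹ ≤ (u m0)⁻¹ := by
        apply inv_anti₀ hpos0 hmm
      have : (m0:ℝ) * (u (m0-1))⁻¹ ≤ (m0:ℝ) * (u m0)⁻¹ :=
        mul_le_mul_of_nonneg_left hinv (by positivity)
      linarith
  have hamgm : 2 ≤ u m0 + (u m0)⁻¹ := by
    have h1 : u m0 * (u m0)⁻¹ = 1 := mul_inv_cancel₀ (ne_of_gt hpos0)
    nlinarith [sq_nonneg (u m0 - 1), hpos0]
  -- combine
  have hrel0 := hrel m0 hm0
  have hbig : 2 * U m0 ≤ γ * U m0 := by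
    rw [hrel0]
    have : 2 ≤ (((N:ℝ) - m0) * u m0 - ((N:ℝ) - (m0+1:ℕ)) * u (m0+1))
        + (((m0:ℝ)+1) * (u m0)⁻¹
            - (if m0 = 0 then (0:ℝ) else (m0:ℝ) * (u (m0-1))⁻¹)) := by
      linarith [hc1, hc2, hamgm]
    -- multiply out
    have hsplit : (((N:ℝ) - m0) * u m0 + ((m0:ℝ)+1) * (u m0)⁻¹) * U m0
        - ((N:ℝ) - (m0+1:ℕ)) * u (m0+1) * U (m0+1)
        - (if m0 = 0 then 0 else (m0:ℝ) * (u (m0-1))⁻¹ * U (m0-1))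
        ≥ (((N:ℝ) - m0) * u m0 + ((m0:ℝ)+1) * (u m0)⁻¹) * U m0
        - ((N:ℝ) - (m0+1:ℕ)) * u (m0+1) * U m0
        - (if m0 = 0 then 0 else (m0:ℝ) * (u (m0-1))⁻¹) * U m0 := by
      have hb' : (if m0 = 0 then (0:ℝ) else (m0:ℝ) * (u (m0-1))⁻¹ * U (m0-1))
          ≤ (if m0 = 0 then (0:ℝ) else (m0:ℝ) * (u (m0-1))⁻¹) * U m0 := by
        rcases eq_or_ne m0 0 with h0 | h0
        · simp [h0]
        · simp only [if_neg h0] at hb ⊢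
          linarith [hb]
      linarith [ha, hb']
    have hmul : (((((N:ℝ) - m0) * u m0 - ((N:ℝ) - (m0+1:ℕ)) * u (m0+1))
        + (((m0:ℝ)+1) * (u m0)⁻¹
            - (if m0 = 0 then (0:ℝ) else (m0:ℝ) * (u (m0-1))⁻¹)))) * U m0
        ≥ 2 * U m0 := by
      apply mul_le_mul_of_nonneg_right this (le_of_lt hU0)
    have hring : (((((N:ℝ) - m0) * u m0 - ((N:ℝ) - (m0+1:ℕ)) * u (m0+1))
        + (((m0:ℝ)+1) * (u m0)⁻¹
            - (if m0 = 0 then (0:ℝ) else (m0:ℝ) * (u (m0-1))⁻¹)))) * U m0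
        = (((N:ℝ) - m0) * u m0 + ((m0:ℝ)+1) * (u m0)⁻¹) * U m0
        - ((N:ℝ) - (m0+1:ℕ)) * u (m0+1) * U m0
        - (if m0 = 0 then 0 else (m0:ℝ) * (u (m0-1))⁻¹) * U m0 := by
      rcases eq_or_ne m0 0 with rfl | h0
      · simp only [if_pos rfl]; push_cast; ring
      · simp only [if_neg h0]; push_cast; ring
    linarith [hsplit, hmul, hring.ge, hring.le]
  exact le_of_mul_le_mul_right hbig hU0

end HypGapAux

/-- for every `N ≥ 1` and convex `w` on `{0,…,N}`, the fundamental gap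
of the hypercube Jacobi matrix `J_w` is at least `2`. -/
theorem hypercube_gap_convex (N : ℕ) (hN : 1 ≤ N) (w : ℕ → ℝ)
    (hw : ∀ m : ℕ, 1 ≤ m → m < N → 0 ≤ w (m - 1) - 2 * w m + w (m + 1))
    (l1 l2 : ℝ) (h : TwoSmallest (hypJ N w) l1 l2) :
    l2 - l1 ≥ 2 := by
  obtain ⟨hE1, hE2, hlt, hmin⟩ := h
  have hminI : ∀ μ, IsEigen' (hypJ N w) μ → l1 ≤ μ := fun μ hμ => (hmin μ hμ).1
  obtain ⟨x, hxpos, hx⟩ := exists_pos_ground N w l1 hE1 hminI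
  obtain ⟨y, hyne, hy⟩ := hE2
  have hXpos : ∀ m, m ≤ N → 0 < vext N x m := by
    intro m hm
    rw [ext_of_lt N x m (by omega)]
    exact hxpos _
  have hXne : ∀ m, m ≤ N → vext N x m ≠ 0 := fun m hm => ne_of_gt (hXpos m hm)
  obtain ⟨u, hu⟩ : ∃ u : ℕ → ℝ,
      u = fun m => hh N m * vext N x (m+1) / (((N:ℝ) - m) * vext N x m) := ⟨_, rfl⟩
  have hupos : ∀ m, m + 1 ≤ N → 0 < u m := by
    intro m hm
    rw [hu]
    simp only
    apply div_pos
    · exact mul_pos (hh_pos N m (by omega)) (hXpos (m+1) (by omega))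
    · apply mul_pos _ (hXpos m (by omega))
      have : (m:ℝ) < N := by exact_mod_cast (by omega : m < N)
      linarith
  have hR1 : ∀ m, m ≤ N → hh N m * vext N x (m+1) = ((N:ℝ) - m) * u m * vext N x m := by
    intro m hm
    rcases Nat.lt_or_ge m N with hlt' | hge
    · have h1 : ((N:ℝ) - m) ≠ 0 := by
        have : (m:ℝ) < N := by exact_mod_cast hlt'
        linarith
      have h2 : vext N x m ≠ 0 := hXne m (by omega)
      rw [hu]
      simp only
      field_simp
    · have hmN : m = N := by omega
      rw [hmN, hh_last]
      have hz : ((N:ℝ) - (N:ℕ)) = 0 := by push_cast; ring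
      rw [hz]
      ring
  have hR2 : ∀ j, j + 1 ≤ N → hh N j * vext N x j
      = ((j:ℝ)+1) * (u j)⁻¹ * vext N x (j+1) := by
    intro j hj
    have h1 := hR1 j (by omega)
    have hhs := hh_sq N j (by omega)
    have hun : u j ≠ 0 := ne_of_gt (hupos j hj)
    have hXj : vext N x j ≠ 0 := hXne j (by omega)
    have hXj1 : vext N x (j+1) ≠ 0 := hXne (j+1) (by omega)
    have hNj : ((N:ℝ) - j) ≠ 0 := by
      have : (j:ℝ) + 1 ≤ N := by exact_mod_cast hj
      linarith
    have key : (((N:ℝ) - j) * u j) * (hh N j * vext N x j)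
        = (((N:ℝ) - j) * u j) * (((j:ℝ)+1) * (u j)⁻¹ * vext N x (j+1)) := by
      have hinv : u j * (u j)⁻¹ = 1 := mul_inv_cancel₀ hun
      linear_combination (-(hh N j)) * h1 + vext N x (j+1) * hhs
        - ((j:ℝ)+1) * ((N:ℝ) - j) * vext N x (j+1) * hinv
    exact mul_left_cancel₀ (mul_ne_zero hNj hun) key
  have hEX := eig_row N w x l1 hx
  have hEY := eig_row N w y l2 hy
  have dEq0 : (N:ℝ) + w 0 - l1 = (N:ℝ) * u 0 := by
    have e := hEX 0 (by omega)
    rw [if_pos rfl, zero_add, hR1 0 (by omega)] at e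
    have := mul_right_cancel₀ (hXne 0 (by omega)) e
    rw [this]
    norm_num
  have dEqS : ∀ j, j + 1 ≤ N →
      (N:ℝ) + w (j+1) - l1 = ((N:ℝ) - ((j+1:ℕ):ℝ)) * u (j+1) + ((j:ℝ)+1) * (u j)⁻¹ := by
    intro j hj
    have e := hEX (j+1) (by omega)
    rw [if_neg (by omega : ¬(j+1 = 0))] at e
    simp only [Nat.add_sub_cancel] at e
    rw [hR2 j hj, hR1 (j+1) (by omega)] at e
    have hXj1 := hXne (j+1) (by omega)
    apply mul_right_cancel₀ hXj1
    linear_combination e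
  have hstar : ∀ j, j + 2 ≤ N →
      ((N:ℝ) - j) * (u (j+1) - u j) + (j:ℝ) * ((u j)⁻¹ - (u (j-1))⁻¹)
      ≤ ((N:ℝ) - j - 2) * (u (j+2) - u (j+1)) + ((j:ℝ)+2) * ((u (j+1))⁻¹ - (u j)⁻¹) := by
    intro j hj
    have hwc := hw (j+1) (by omega) (by omega)
    simp only [Nat.add_sub_cancel] at hwc
    rcases Nat.eq_zero_or_pos j with rfl | hpos
    · have e0 := dEq0
      have e1 := dEqS 0 (by omega)
      have e2 := dEqS 1 (by omega)
      norm_num at e1 e2 hwc ⊢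
      linarith [e0, e1, e2, hwc]
    · obtain ⟨k, rfl⟩ : ∃ k, j = k + 1 := ⟨j - 1, by omega⟩
      have e1 := dEqS k (by omega)
      have e2 := dEqS (k+1) (by omega)
      have e3 := dEqS (k+2) (by omega)
      simp only [Nat.add_sub_cancel] at e1 e2 e3 hwc ⊢
      push_cast at e1 e2 e3 hwc ⊢
      have hidx1 : k + 1 + 1 = k + 2 := by omega
      have hidx2 : k + 1 + 2 = k + 2 + 1 := by omega
      rw [hidx1, hidx2]
      linarith [e1, e2, e3, hwc]
  have hmono := u_mono N u hupos hstar
  -- second eigenvector machinery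
  obtain ⟨G, hG⟩ : ∃ G : ℕ → ℝ, G = fun m => vext N y m / vext N x m := ⟨_, rfl⟩
  have hYG : ∀ m, m ≤ N + 1 → vext N y m = G m * vext N x m := by
    intro m hm
    rcases Nat.lt_or_ge m (N+1) with hlt' | hge
    · rw [hG]
      simp only
      rw [div_mul_cancel₀ _ (hXne m (by omega))]
    · have hmN : m = N + 1 := by omega
      subst hmN
      rw [ext_top N y, ext_top N x]
      ring
  obtain ⟨U, hUdef⟩ : ∃ U : ℕ → ℝ, U = fun m => G (m+1) - G m := ⟨_, rfl⟩
  have grelS : ∀ j, j + 1 ≤ N → (l2 - l1) * G (j+1)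
      = ((j:ℝ)+1) * (u j)⁻¹ * U j - ((N:ℝ) - ((j+1:ℕ):ℝ)) * u (j+1) * U (j+1) := by
    intro j hj
    have eY := hEY (j+1) (by omega)
    have eX := hEX (j+1) (by omega)
    rw [if_neg (by omega : ¬(j+1 = 0))] at eY eX
    simp only [Nat.add_sub_cancel] at eY eX
    rw [hYG (j+1) (by omega), hYG j (by omega), hYG (j+1+1) (by omega)] at eY
    have r2 := hR2 j hj
    have r1 := hR1 (j+1) (by omega)
    apply mul_right_cancel₀ (hXne (j+1) (by omega))
    rw [hUdef]
    simp only
    linear_combination G (j+1) * eX - eY + (G (j+1) - G j) * r2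
      + (G (j+1) - G (j+1+1)) * r1
  have grel0 : (l2 - l1) * G 0 = -((N:ℝ) * u 0 * U 0) := by
    have eY := hEY 0 (by omega)
    have eX := hEX 0 (by omega)
    rw [if_pos rfl, zero_add] at eY eX
    rw [hYG 0 (by omega), hYG 1 (by omega)] at eY
    have r1 := hR1 0 (by omega)
    apply mul_right_cancel₀ (hXne 0 (by omega))
    rw [hUdef]
    simp only
    have hc0 : ((N:ℝ) - ((0:ℕ):ℝ)) = (N:ℝ) := by norm_num
    linear_combination G 0 * eX - eY + (G 0 - G 1) * r1
  have hUrel : ∀ m, m + 1 ≤ N → (l2 - l1) * U m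
      = (((N:ℝ) - m) * u m + ((m:ℝ)+1) * (u m)⁻¹) * U m
        - ((N:ℝ) - ((m+1:ℕ):ℝ)) * u (m+1) * U (m+1)
        - (if m = 0 then 0 else (m:ℝ) * (u (m-1))⁻¹ * U (m-1)) := by
    intro m hm
    rcases Nat.eq_zero_or_pos m with rfl | hmp
    · rw [if_pos rfl]
      have g1 := grelS 0 (by omega)
      have hU0 : U 0 = G (0+1) - G 0 := by rw [hUdef]
      push_cast at g1 grel0 ⊢
      linear_combination g1 - grel0 + (l2 - l1) * hU0
    · obtain ⟨k, rfl⟩ : ∃ k, m = k + 1 := ⟨m - 1, by omega⟩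
      rw [if_neg (by omega)]
      simp only [Nat.add_sub_cancel]
      have g1 := grelS (k+1) (by omega)
      have g2 := grelS k (by omega)
      have hU : U (k+1) = G (k+1+1) - G (k+1) := by rw [hUdef]
      push_cast at g1 g2 ⊢
      linear_combination g1 - g2 + (l2 - l1) * hU
  -- U is not identically zero
  have hUex : ∃ m, m + 1 ≤ N ∧ U m ≠ 0 := by
    by_contra hc
    push_neg at hc
    have hGconst : ∀ m, m ≤ N → G m = G 0 := by
      intro m
      induction m with
      | zero => intro _; rfl
      | succ k ih =>
        intro hk
        have h1 := hc k (by omega)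
        rw [hUdef] at h1
        simp only at h1
        have h2 := ih (by omega)
        have h3 : G (k+1) - G k = 0 := by
          by_contra hc2
          exact hc2 (by rw [← h1])
        linarith [h3, h2.le, h2.ge]
    have hyx : y = (G 0) • x := by
      funext i
      have h1 : vext N y (i:ℕ) = G (i:ℕ) * vext N x (i:ℕ) := hYG _ (by omega)
      rw [hGconst (i:ℕ) (by omega)] at h1
      rw [ext_of_lt N y _ i.isLt, ext_of_lt N x _ i.isLt] at h1
      simpa using h1
    have h2 : (hypJ N w).mulVec y = (G 0 * l1) • x := by
      rw [hyx, Matrix.mulVec_smul, hx, smul_smul]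
    have h4 : (G 0 * l1) • x = (l2 * G 0) • x := by
      rw [← h2, hy, hyx, smul_smul]
    have h5 : (G 0 * l1) * x ⟨0, by omega⟩ = (l2 * G 0) * x ⟨0, by omega⟩ :=
      congrFun h4 ⟨0, by omega⟩
    have hx0 : x ⟨0, by omega⟩ ≠ 0 := ne_of_gt (hxpos _)
    have e : G 0 * l1 = l2 * G 0 := mul_right_cancel₀ hx0 h5
    have e2 : G 0 * (l2 - l1) = 0 := by linear_combination -e
    have hG0 : G 0 = 0 := by
      rcases mul_eq_zero.mp e2 with h' | h'
      · exact h'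
      · exfalso; have : l2 ≠ l1 := ne_of_gt hlt; exact this (by linarith)
    rw [hG0, zero_smul] at hyx
    exact hyne hyx
  obtain ⟨m1, hm1N, hm1ne⟩ := hUex
  have hNE : (Finset.range N).Nonempty := ⟨m1, Finset.mem_range.mpr (by omega)⟩
  obtain ⟨m0, hm0mem, hm0max⟩ := Finset.exists_max_image (Finset.range N) (fun m => |U m|) hNE
  have hm0N : m0 + 1 ≤ N := by
    have := Finset.mem_range.mp hm0mem
    omega
  have habs : 0 < |U m0| :=
    lt_of_lt_of_le (abs_pos.mpr hm1ne) (hm0max m1 (Finset.mem_range.mpr (by omega)))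
  rcases lt_trichotomy (U m0) 0 with hneg | hzero | hposU
  · have hrel' : ∀ m, m + 1 ≤ N → (l2 - l1) * (-U m)
        = (((N:ℝ) - m) * u m + ((m:ℝ)+1) * (u m)⁻¹) * (-U m)
          - ((N:ℝ) - ((m+1:ℕ):ℝ)) * u (m+1) * (-U (m+1))
          - (if m = 0 then 0 else (m:ℝ) * (u (m-1))⁻¹ * (-U (m-1))) := by
      intro m hm
      have := hUrel m hm
      rcases eq_or_ne m 0 with rfl | h0
      · simp only [reduceIte] at this ⊢
        linear_combination -this
      · simp only [if_neg h0] at this ⊢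
        linear_combination -this
    have h2le := gap_core N u (l2 - l1) (fun m => -U m) hupos hmono
      (by intro m hm; simpa using hrel' m hm) m0 hm0N
      (by simpa using neg_pos.mpr hneg)
      (by
        intro j hj
        simp only [abs_neg]
        calc |U j| ≤ |U m0| := hm0max j (Finset.mem_range.mpr (by omega))
          _ = -U m0 := abs_of_neg hneg)
    linarith
  · rw [hzero] at habs
    simp at habs
  · have h2le := gap_core N u (l2 - l1) U hupos hmono hUrel m0 hm0N hposU
      (by
        intro j hj
        calc |U j| ≤ |U m0| := hm0max j (Finset.mem_range.mpr (by omega))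
          _ = U m0 := abs_of_pos hposU)
    linarith
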